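/- arXiv:1305.4591 — 8 statements merged into one kernel-verified Lean document; each statement's English description precedes it below -/
import Mathlib

section
/- For every c = (c(0), c(1)) ∈ ℂ², the encoded vector satisfies ‖f(c)‖² = 32·(|c(0)|² + |c(1)|²); equivalently, 2^{−5/2}·f is a linear isometry from ℂ² into V₅. -/
open scoped BigOperators

noncomputable section

/-- The 5-qubit state space `V₅ = (Fin 5 → Fin 2) → ℂ ≅ ℂ^32` with the standard
Hermitian inner product. -/
abbrev V5 : Type := EuclideanSpace ℂ (Fin 5 → Fin 2)

/-- The phase exponent `γ(x,y) = x(y₀+y₁+y₂) + y₀y₁ + y₀y₃ + y₁y₄ + y₂y₃ + y₂y₄ + y₃y₄`,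
read modulo 2 via `(-1)^·`. -/
def gam (x : Fin 2) (y : Fin 5 → Fin 2) : ℕ :=
  x.val * ((y 0).val + (y 1).val + (y 2).val)
    + (y 0).val * (y 1).val + (y 0).val * (y 3).val + (y 1).val * (y 4).val
    + (y 2).val * (y 3).val + (y 2).val * (y 4).val + (y 3).val * (y 4).val

/-- The graph-code encoding `f : ℂ² → V₅`, `f(c)(y) = Σ_x (−1)^{γ(x,y)} c(x)`
(normalization factors omitted). -/
def enc (c : Fin 2 → ℂ) : V5 := WithLp.toLp 2 (fun y => ∑ x : Fin 2, (-1 : ℂ) ^ gam x y * c x)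

lemma sum_pi5 {M : Type*} [AddCommMonoid M] (g : (Fin 5 → Fin 2) → M) :
    ∑ y : Fin 5 → Fin 2, g y
      = ∑ a : Fin 2, ∑ b : Fin 2, ∑ d : Fin 2, ∑ e : Fin 2, ∑ f : Fin 2,
          g ![a, b, d, e, f] := by
  rw [← (Fin.consEquiv (n := 4) (fun _ => Fin 2)).sum_comp]
  simp only [Fintype.sum_prod_type]
  congr 1; ext a
  rw [← (Fin.consEquiv (n := 3) (fun _ => Fin 2)).sum_comp]
  simp only [Fintype.sum_prod_type]
  congr 1; ext b
  rw [← (Fin.consEquiv (n := 2) (fun _ => Fin 2)).sum_comp]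
  simp only [Fintype.sum_prod_type]
  congr 1; ext d
  rw [← (Fin.consEquiv (n := 1) (fun _ => Fin 2)).sum_comp]
  simp only [Fintype.sum_prod_type]
  congr 1; ext e
  rw [← (Fin.consEquiv (n := 0) (fun _ => Fin 2)).sum_comp]
  simp only [Fintype.sum_prod_type]
  congr 1; ext f
  rw [Fintype.sum_unique]
  congr 1

/-- The encoded vector satisfies `‖f(c)‖² = 32 (|c(0)|² + |c(1)|²)`;
equivalently `2^{-5/2} f` is a linear isometry from `ℂ²` into `V₅`. -/
theorem enc_norm_sq (c : Fin 2 → ℂ) :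
    ‖enc c‖ ^ 2 = 32 * (‖c 0‖ ^ 2 + ‖c 1‖ ^ 2) := by
  have h1 : ‖enc c‖ ^ 2 = ∑ y : Fin 5 → Fin 2, ‖enc c y‖ ^ 2 := by
    rw [EuclideanSpace.norm_eq, Real.sq_sqrt (by positivity)]
  rw [h1, sum_pi5]
  simp only [enc, gam, Fin.sum_univ_two, Fin.isValue, Matrix.cons_val_zero,
    Matrix.cons_val_one, Matrix.head_cons, Matrix.cons_val_two, Matrix.tail_cons,
    Matrix.cons_val_three, Matrix.cons_val_four, Fin.val_zero, Fin.val_one]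
  norm_num
  simp only [Complex.sq_norm, Complex.normSq_apply, Complex.add_re,
    Complex.add_im, Complex.neg_re, Complex.neg_im, Complex.mul_re, Complex.mul_im,
    Complex.sub_re, Complex.sub_im]
  ring
end
end

section
/- The [[5,1,3]] graph code satisfies the Knill–Laflamme conditions for correcting one arbitrary single-qubit error: for every pair of qubit positions p, q ∈ {1,…,5} and every linear operator E on V₅ that acts as an arbitrary operator on qubits p and q and as the identity on the remaining three qubits, one has ⟨f(e₀), E f(e₁)⟩ = 0 and ⟨f(e₀), E f(e₀)⟩ = ⟨f(e₁), E f(e₁)⟩. (Equivalently, the code spanned by f(e₀), f(e₁) has minimum distance at least 3.) -/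
open scoped BigOperators

noncomputable section

/-- `E : V₅ → V₅` acts (at most) on the pair of qubits `p, q` and as the identity on
the remaining qubits: there is a two-qubit operator `A` whose matrix elements give `E`. -/
def actsOnPair (p q : Fin 5) (E : V5 →ₗ[ℂ] V5) : Prop :=
  ∃ A : (Fin 2 × Fin 2) → (Fin 2 × Fin 2) → ℂ, ∀ (ψ : V5) (y : Fin 5 → Fin 2),
    E ψ y = ∑ a : Fin 2, ∑ b : Fin 2,
      A (y p, y q) (a, b) * ψ (Function.update (Function.update y p a) q b)

def S (p q : Fin 5) (x x' : Fin 2) (st ab : Fin 2 × Fin 2) : ℤ :=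
  ∑ y ∈ Finset.univ.filter (fun y : Fin 5 → Fin 2 => (y p, y q) = st),
    (-1) ^ gam x y * (-1) ^ gam x' (Function.update (Function.update y p ab.1) q ab.2)

lemma S01 : ∀ p q st ab, S p q 0 1 st ab = 0 := by decide
lemma SeqLem : ∀ p q st ab, S p q 0 0 st ab = S p q 1 1 st ab := by decide

lemma enc_basis (x : Fin 2) (c : Fin 2 → ℂ) (hc : ∀ x', c x' = if x' = x then 1 else 0)
    (y : Fin 5 → Fin 2) : enc c y = (-1 : ℂ) ^ gam x y := by
  fin_cases x <;> simp [enc, Fin.sum_univ_two, hc 0, hc 1]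

lemma inner_expand (p q : Fin 5) (E : V5 →ₗ[ℂ] V5)
    (A : (Fin 2 × Fin 2) → (Fin 2 × Fin 2) → ℂ)
    (hA : ∀ (ψ : V5) (y : Fin 5 → Fin 2),
      E ψ y = ∑ a : Fin 2, ∑ b : Fin 2,
        A (y p, y q) (a, b) * ψ (Function.update (Function.update y p a) q b))
    (x x' : Fin 2) (c c' : Fin 2 → ℂ)
    (hc : ∀ y, enc c y = (-1 : ℂ) ^ gam x y)
    (hc' : ∀ y, enc c' y = (-1 : ℂ) ^ gam x' y) :
    (inner ℂ (enc c) (E (enc c')) : ℂ) =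
      ∑ ab : Fin 2 × Fin 2, ∑ st : Fin 2 × Fin 2, A st ab * (S p q x x' st ab : ℂ) := by
  have h1 : (inner ℂ (enc c) (E (enc c')) : ℂ)
      = ∑ y : Fin 5 → Fin 2, ∑ ab : Fin 2 × Fin 2,
        A (y p, y q) ab * ((-1 : ℂ) ^ gam x y *
          (-1 : ℂ) ^ gam x' (Function.update (Function.update y p ab.1) q ab.2)) := by
    rw [PiLp.inner_apply]
    refine Finset.sum_congr rfl fun y _ => ?_
    rw [hA, hc, Fintype.sum_prod_type]
    simp only [hc', RCLike.inner_apply, map_pow, map_neg, map_one, Finset.mul_sum, Finset.sum_mul]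
    refine Finset.sum_congr rfl fun a _ => Finset.sum_congr rfl fun b _ => by ring
  rw [h1, Finset.sum_comm]
  refine Finset.sum_congr rfl fun ab _ => ?_
  rw [← Finset.sum_fiberwise Finset.univ (fun y : Fin 5 → Fin 2 => (y p, y q))]
  refine Finset.sum_congr rfl fun st _ => ?_
  rw [S]
  push_cast
  rw [Finset.mul_sum]
  refine Finset.sum_congr rfl fun y hy => ?_
  rw [Finset.mem_filter] at hy
  rw [hy.2]

/-- The `[[5,1,3]]` graph code satisfies the Knill–Laflamme conditions for correcting one
arbitrary single-qubit error: for every pair of positions `p, q` and every operator `E`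
acting only on qubits `p` and `q`, `⟨f(e₀), E f(e₁)⟩ = 0` and
`⟨f(e₀), E f(e₀)⟩ = ⟨f(e₁), E f(e₁)⟩`. -/
theorem knill_laflamme_513 (p q : Fin 5) (E : V5 →ₗ[ℂ] V5) (hE : actsOnPair p q E) :
    (inner ℂ (enc ![1, 0]) (E (enc ![0, 1])) : ℂ) = 0 ∧
    (inner ℂ (enc ![1, 0]) (E (enc ![1, 0])) : ℂ) =
      (inner ℂ (enc ![0, 1]) (E (enc ![0, 1])) : ℂ) := by
  obtain ⟨A, hA⟩ := hE
  have h0 : ∀ y, enc ![1, 0] y = (-1 : ℂ) ^ gam 0 y :=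
    enc_basis 0 _ (by intro x; fin_cases x <;> simp)
  have h1 : ∀ y, enc ![0, 1] y = (-1 : ℂ) ^ gam 1 y :=
    enc_basis 1 _ (by intro x; fin_cases x <;> simp)
  constructor
  · rw [inner_expand p q E A hA 0 1 _ _ h0 h1]
    simp [S01]
  · rw [inner_expand p q E A hA 0 0 _ _ h0 h0,
      inner_expand p q E A hA 1 1 _ _ h1 h1]
    simp only [SeqLem]
end
end

section
/- A phase-flip on qubit 1 of the encoded state produces error syndrome 1000 and leaves the data unchanged: for every c = (c(0), c(1)) ∈ ℂ² there is a nonzero complex scalar α independent of c such that T(S₁(f(c))) = α · |1000⟩ ⊗ (c(0)|0⟩ + c(1)|1⟩). -/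
open scoped BigOperators

noncomputable section

/-- The decoding phase exponent `θ`, with `z = (l₀, l₁, l₃, l₄, x̂)`. -/
def theta (y z : Fin 5 → Fin 2) : ℕ :=
  (z 4).val * ((y 0).val + (y 1).val + (y 2).val)
    + (y 0).val * (y 1).val + (y 0).val * (y 3).val + (y 1).val * (y 4).val
    + (y 2).val * (y 3).val + (y 2).val * (y 4).val + (y 3).val * (y 4).val
    + (y 0).val * (z 0).val + (y 1).val * (z 1).val + (y 3).val * (z 2).val
    + (y 4).val * (z 3).val

/-- The graph decoding operator `T : V₅ → V₅`,
`T|y⟩ = Σ_{l₀l₁l₃l₄, x̂} (−1)^θ |l₀l₁l₃l₄x̂⟩`. -/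
def dec (ψ : V5) : V5 := WithLp.toLp 2 (fun z => ∑ y : Fin 5 → Fin 2, (-1 : ℂ) ^ theta y z * ψ y)

/-- The product state `|s₀s₁s₂s₃⟩ ⊗ (a|0⟩ + b|1⟩)` in `V₅`: four syndrome qubits
followed by one data qubit. -/
def synData (s : Fin 4 → Fin 2) (a b : ℂ) : V5 :=
  WithLp.toLp 2 (fun y => (if y 0 = s 0 ∧ y 1 = s 1 ∧ y 2 = s 2 ∧ y 3 = s 3 then (1 : ℂ) else 0)
    * (if y 4 = 0 then a else b))

/-- Bit-flip (Pauli `σ_X`) on qubit `i` (0-indexed: qubit `j` of the paper is `i = j - 1`). -/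
def bitFlip (i : Fin 5) (ψ : V5) : V5 := WithLp.toLp 2 (fun y => ψ (Function.update y i (1 - y i)))

/-- Phase-flip (Pauli `σ_Z`) on qubit `i` (0-indexed). -/
def phaseFlip (i : Fin 5) (ψ : V5) : V5 := WithLp.toLp 2 (fun y => (-1 : ℂ) ^ (y i).val * ψ y)

/-- A phase-flip on qubit 1 produces syndrome `1000` and leaves the data unchanged: `T(S₁ f(c)) = α |1000⟩ ⊗ (c(0)|0⟩ + c(1)|1⟩)` with `α ≠ 0` independent of `c`. -/
theorem phase_flip_qubit1_syndrome :
    ∃ α : ℂ, α ≠ 0 ∧ ∀ c : Fin 2 → ℂ,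
      dec (phaseFlip 0 (enc c)) = α • synData ![1, 0, 0, 0] (c 0) (c 1) := by
  have key : ∀ z : Fin 5 → Fin 2, ∀ x : Fin 2,
      (∑ y : Fin 5 → Fin 2, (-1 : ℤ) ^ (theta y z + (y 0).val + gam x y))
        = if z 0 = 1 ∧ z 1 = 0 ∧ z 2 = 0 ∧ z 3 = 0 ∧ z 4 = x then 32 else 0 := by
    decide
  refine ⟨32, by norm_num, fun c => ?_⟩
  ext z
  have hLHS : dec (phaseFlip 0 (enc c)) z
      = ∑ x : Fin 2, ((∑ y : Fin 5 → Fin 2,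
          (-1 : ℤ) ^ (theta y z + (y 0).val + gam x y)) : ℤ) * c x := by
    simp only [dec, phaseFlip, enc, WithLp.ofLp_toLp, Finset.mul_sum]
    rw [Finset.sum_comm]
    congr 1
    funext x
    push_cast
    rw [Finset.sum_mul]
    congr 1
    funext y
    ring
  rw [hLHS]
  simp only [key]
  simp only [synData, WithLp.ofLp_toLp, PiLp.smul_apply, Pi.smul_apply, smul_eq_mul]
  by_cases h : z 0 = 1 ∧ z 1 = 0 ∧ z 2 = 0 ∧ z 3 = 0
  · obtain ⟨h0, h1, h2, h3⟩ := h
    obtain ⟨z4, hz4⟩ : ∃ v, z 4 = v := ⟨_, rfl⟩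
    fin_cases z4 <;>
      simp_all [Fin.sum_univ_two]
  · have h' : ∀ x : Fin 2,
        ¬(z 0 = 1 ∧ z 1 = 0 ∧ z 2 = 0 ∧ z 3 = 0 ∧ z 4 = x) := by tauto
    have h'' : ¬(z 0 = ![1,0,0,0] 0 ∧ z 1 = ![1,0,0,0] 1 ∧ z 2 = ![1,0,0,0] 2
        ∧ z 3 = ![1,0,0,0] 3) := by simpa using h
    simp only [h', if_false, if_neg h'']
    simp
end
end

section
/- A phase-flip on qubit 2 of the encoded state produces error syndrome 0100 and leaves the data unchanged: for every c = (c(0), c(1)) ∈ ℂ² there is a nonzero complex scalar α independent of c such that T(S₂(f(c))) = α · |0100⟩ ⊗ (c(0)|0⟩ + c(1)|1⟩). -/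
open scoped BigOperators

noncomputable section

lemma sum5_aux (F : (Fin 5 → Fin 2) → ℂ) :
    ∑ y, F y = ∑ t : Fin 2 × Fin 2 × Fin 2 × Fin 2 × Fin 2,
      F ![t.1, t.2.1, t.2.2.1, t.2.2.2.1, t.2.2.2.2] := by
  refine (Fintype.sum_bijective (fun t : Fin 2 × Fin 2 × Fin 2 × Fin 2 × Fin 2 =>
    ![t.1, t.2.1, t.2.2.1, t.2.2.2.1, t.2.2.2.2]) ?_ _ F (fun t => rfl)).symm
  decide

lemma fin2cases_aux (i : Fin 2) : i = 0 ∨ i = 1 := by omega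

set_option maxHeartbeats 8000000 in
/-- A phase-flip on qubit 2 produces syndrome `0100` and leaves the data unchanged: `T(S₂ f(c)) = α |0100⟩ ⊗ (c(0)|0⟩ + c(1)|1⟩)` with `α ≠ 0` independent of `c`. -/
theorem phase_flip_qubit2_syndrome :
    ∃ α : ℂ, α ≠ 0 ∧ ∀ c : Fin 2 → ℂ,
      dec (phaseFlip 1 (enc c)) = α • synData ![0, 1, 0, 0] (c 0) (c 1) := by
  refine ⟨32, by norm_num, fun c => ?_⟩
  ext z
  show dec (phaseFlip 1 (enc c)) z = 32 * synData ![0,1,0,0] (c 0) (c 1) z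
  simp only [dec, PiLp.toLp_apply]
  rw [sum5_aux]
  simp only [phaseFlip, enc, synData, theta, gam, PiLp.toLp_apply, Fintype.sum_prod_type,
    Fin.sum_univ_two, Matrix.cons_val_zero, Matrix.cons_val_one,
    Matrix.head_cons, Matrix.cons_val_two, Matrix.tail_cons, Matrix.cons_val_three,
    Matrix.cons_val_four, Fin.isValue, Fin.val_zero, Fin.val_one]
  rcases fin2cases_aux (z 0) with h0 | h0 <;> rcases fin2cases_aux (z 1) with h1 | h1 <;>
    rcases fin2cases_aux (z 2) with h2 | h2 <;> rcases fin2cases_aux (z 3) with h3 | h3 <;>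
    rcases fin2cases_aux (z 4) with h4 | h4 <;>
  · rw [h0, h1, h2, h3, h4]
    norm_num
    try ring
end
end

section
/- A bit-flip on qubit 1 of the encoded state produces error syndrome 0110 and a phase-flipped data qubit: for every c = (c(0), c(1)) ∈ ℂ² there is a nonzero complex scalar α independent of c such that T(B₁(f(c))) = α · |0110⟩ ⊗ (c(0)|0⟩ − c(1)|1⟩); applying σ_Z to the data qubit then restores the original state. -/
open scoped BigOperators

noncomputable section

def wz (z : Fin 5 → Fin 2) (x : Fin 2) : ℤ :=
  if z 0 = 0 ∧ z 1 = 1 ∧ z 2 = 1 ∧ z 3 = 0 then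
    (if x = 0 then (if z 4 = 0 then 1 else 0) else (if z 4 = 1 then -1 else 0))
  else 0

lemma key : ∀ z : Fin 5 → Fin 2, ∀ x : Fin 2,
    (∑ y : Fin 5 → Fin 2, (-1:ℤ) ^ (theta y z + gam x (Function.update y 0 (1 - y 0))))
      = 32 * wz z x := by decide

/-- A bit-flip on qubit 1 produces syndrome `0110` and a phase-flipped data qubit: `T(B₁ f(c)) = α |0110⟩ ⊗ (c(0)|0⟩ − c(1)|1⟩)` with `α ≠ 0` independent of `c`; applying `σ_Z` to the data qubit restores the original state. -/
theorem bit_flip_qubit1_syndrome :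
    ∃ α : ℂ, α ≠ 0 ∧ ∀ c : Fin 2 → ℂ,
      dec (bitFlip 0 (enc c)) = α • synData ![0, 1, 1, 0] (c 0) (-(c 1)) := by
  refine ⟨32, by norm_num, fun c => ?_⟩
  ext z
  have step1 : dec (bitFlip 0 (enc c)) z
      = ∑ x : Fin 2,
          (((∑ y : Fin 5 → Fin 2,
            (-1:ℤ) ^ (theta y z + gam x (Function.update y 0 (1 - y 0)))) : ℤ) : ℂ) * c x := by
    simp only [dec, bitFlip, enc, PiLp.toLp_apply, Finset.mul_sum]
    rw [Finset.sum_comm]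
    refine Finset.sum_congr rfl fun x _ => ?_
    push_cast
    rw [Finset.sum_mul]
    refine Finset.sum_congr rfl fun y _ => ?_
    rw [pow_add]; ring
  rw [step1]
  simp only [key]
  have hz : ((32 : ℂ) • synData ![0, 1, 1, 0] (c 0) (-(c 1))) z
      = 32 * synData ![0, 1, 1, 0] (c 0) (-(c 1)) z := rfl
  rw [hz]
  simp only [synData, PiLp.toLp_apply, wz, Fin.sum_univ_two, Matrix.cons_val_zero, Matrix.cons_val_one,
    Matrix.head_cons, Matrix.cons_val_two, Matrix.tail_cons, Matrix.cons_val_three]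
  have h4 : z 4 = 0 ∨ z 4 = 1 := by
    have : ∀ a : Fin 2, a = 0 ∨ a = 1 := by decide
    exact this _
  rcases h4 with h4 | h4 <;> rw [h4] <;>
    by_cases h : z 0 = 0 ∧ z 1 = 1 ∧ z 2 = 1 ∧ z 3 = 0 <;>
      simp only [h, if_true, if_false, eq_self_iff_true,
        (by decide : ((1:Fin 2) = 0) = False),
        (by decide : ((0:Fin 2) = 1) = False), and_true, true_and, and_false, false_and] <;>
      push_cast <;> ring
end
end

section
/- A bit-flip on qubit 3 of the encoded state produces error syndrome 0011 and a phase-flipped data qubit: for every c = (c(0), c(1)) ∈ ℂ² there is a nonzero complex scalar α independent of c such that T(B₃(f(c))) = α · |0011⟩ ⊗ (c(0)|0⟩ − c(1)|1⟩); applying σ_Z to the data qubit then restores the original state. -/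
open scoped BigOperators

noncomputable section

set_option maxRecDepth 4000 in
lemma key_sum (z : Fin 5 → Fin 2) (x : Fin 2) :
    (∑ y : Fin 5 → Fin 2,
      (-1:ℤ) ^ (theta y z + gam x (Function.update y 2 (1 - y 2))))
    = 32 * (if z 0 = 0 ∧ z 1 = 0 ∧ z 2 = 1 ∧ z 3 = 1 ∧ z 4 = x then 1 else 0)
        * (-1:ℤ) ^ x.val := by
  revert z x; decide

/-- A bit-flip on qubit 3 produces syndrome `0011` and a phase-flipped data qubit: `T(B₃ f(c)) = α |0011⟩ ⊗ (c(0)|0⟩ − c(1)|1⟩)` with `α ≠ 0` independent of `c`; applying `σ_Z` to the data qubit restores the original state. -/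
theorem bit_flip_qubit3_syndrome :
    ∃ α : ℂ, α ≠ 0 ∧ ∀ c : Fin 2 → ℂ,
      dec (bitFlip 2 (enc c)) = α • synData ![0, 0, 1, 1] (c 0) (-(c 1)) := by
  refine ⟨32, by norm_num, fun c => ?_⟩
  apply WithLp.ofLp_injective
  funext z
  show (∑ y : Fin 5 → Fin 2, (-1:ℂ) ^ theta y z *
      (∑ x : Fin 2, (-1:ℂ) ^ gam x (Function.update y 2 (1 - y 2)) * c x))
    = (32:ℂ) * synData ![0, 0, 1, 1] (c 0) (-(c 1)) z
  have step : ∀ x : Fin 2,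
      (∑ y : Fin 5 → Fin 2, (-1:ℂ) ^ theta y z *
        ((-1:ℂ) ^ gam x (Function.update y 2 (1 - y 2)) * c x))
      = ((32 * (if z 0 = 0 ∧ z 1 = 0 ∧ z 2 = 1 ∧ z 3 = 1 ∧ z 4 = x then 1 else 0)
          * (-1:ℤ) ^ x.val : ℤ) : ℂ) * c x := by
    intro x
    rw [← key_sum z x]
    push_cast
    rw [Finset.sum_mul]
    refine Finset.sum_congr rfl fun y _ => ?_
    rw [pow_add]; ring
  simp only [Finset.mul_sum]
  rw [Finset.sum_comm]
  rw [Finset.sum_congr rfl (fun x _ => step x), Fin.sum_univ_two]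
  have h2 : ∀ a : Fin 2, a = 0 ∨ a = 1 := by decide
  rcases h2 (z 0) with h0 | h0 <;> rcases h2 (z 1) with h1 | h1 <;>
    rcases h2 (z 2) with hz2 | hz2 <;> rcases h2 (z 3) with h3 | h3 <;>
    rcases h2 (z 4) with h4 | h4 <;>
  · simp [synData, h0, h1, hz2, h3, h4]
    try push_cast
    try ring
end
end

section
/- A combined bit-and-phase flip on qubit 1 of the encoded state produces error syndrome 1110: for every c = (c(0), c(1)) ∈ ℂ² there is a nonzero complex scalar α independent of c such that T(BS₁(f(c))) = α · |1110⟩ ⊗ (−c(0)|0⟩ + c(1)|1⟩). -/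
open scoped BigOperators

noncomputable section

lemma upd5 (a b c d e : Fin 2) :
    Function.update ![a,b,c,d,e] (0 : Fin 5) (1 - a) = ![1-a,b,c,d,e] := by
  funext i; fin_cases i <;> simp [Function.update]

def coefA (x : Fin 2) (z : Fin 5 → Fin 2) : ℤ :=
  ∑ y : Fin 5 → Fin 2,
    (-1:ℤ)^(theta y z + (y 0).val + gam x (Function.update y 0 (1 - y 0)))

lemma coefA_val : ∀ z : Fin 5 → Fin 2,
    coefA 0 z = (if z = ![1,1,1,0,0] then 32 else 0) ∧
    coefA 1 z = (if z = ![1,1,1,0,1] then -32 else 0) := by decide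

lemma lhs_eq (c : Fin 2 → ℂ) (z : Fin 5 → Fin 2) :
    dec (phaseFlip 0 (bitFlip 0 (enc c))) z
      = (coefA 0 z : ℂ) * c 0 + (coefA 1 z : ℂ) * c 1 := by
  simp only [dec, phaseFlip, bitFlip, enc, Fin.sum_univ_two, coefA,
    Int.cast_sum, Finset.sum_mul, PiLp.toLp_apply, ← Finset.sum_add_distrib]
  refine Finset.sum_congr rfl fun y _ => ?_
  push_cast [pow_add]
  ring

lemma funext5 (w v : Fin 5 → Fin 2) :
    w = v ↔ (w 0 = v 0 ∧ w 1 = v 1 ∧ w 2 = v 2 ∧ w 3 = v 3 ∧ w 4 = v 4) := by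
  constructor
  · rintro rfl; exact ⟨rfl, rfl, rfl, rfl, rfl⟩
  · rintro ⟨a, b, c, d, e⟩; funext i; fin_cases i <;> assumption

/-- A combined bit-and-phase flip `BS₁ = S₁ ∘ B₁` on qubit 1 produces syndrome `1110`: `T(BS₁ f(c)) = α |1110⟩ ⊗ (−c(0)|0⟩ + c(1)|1⟩)` with `α ≠ 0` independent of `c`. -/
theorem bit_phase_flip_qubit1_syndrome :
    ∃ α : ℂ, α ≠ 0 ∧ ∀ c : Fin 2 → ℂ,
      dec (phaseFlip 0 (bitFlip 0 (enc c))) = α • synData ![1, 1, 1, 0] (-(c 0)) (c 1) := by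
  refine ⟨-32, by norm_num, fun c => ?_⟩
  ext z
  rw [lhs_eq, PiLp.smul_apply, smul_eq_mul]
  obtain ⟨h0, h1⟩ := coefA_val z
  rw [h0, h1, synData, PiLp.toLp_apply]
  have h : ∀ a : Fin 2, a = 0 ∨ a = 1 := by decide
  obtain e0 | e0 := h (z 0) <;> obtain e1 | e1 := h (z 1) <;>
    obtain e2 | e2 := h (z 2) <;> obtain e3 | e3 := h (z 3) <;>
    obtain e4 | e4 := h (z 4) <;>
  norm_num [e0, e1, e2, e3, e4, funext5, Matrix.cons_val_zero, Matrix.cons_val_one,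
    Matrix.cons_val_succ, Matrix.cons_val_two, Matrix.cons_val_three, Matrix.cons_val_four]
end
end

section
/- A combined bit-and-phase flip on qubit 3 of the encoded state produces error syndrome 1111: for every c = (c(0), c(1)) ∈ ℂ² there is a nonzero complex scalar α independent of c such that T(BS₃(f(c))) = α · |1111⟩ ⊗ (−c(0)|1⟩ + c(1)|0⟩). -/
open scoped BigOperators

noncomputable section

/-- Integer kernel: `K x z = Σ_y (−1)^{θ(y,z) + y₂ + γ(x, y with bit 2 flipped)}`. -/
def Kint (x : Fin 2) (z : Fin 5 → Fin 2) : ℤ :=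
  ∑ y : Fin 5 → Fin 2,
    (-1 : ℤ) ^ (theta y z + (y 2).val + gam x (Function.update y 2 (1 - y 2)))

/-- Target integer kernel. -/
def Ktgt (x : Fin 2) (z : Fin 5 → Fin 2) : ℤ :=
  if z 0 = 1 ∧ z 1 = 1 ∧ z 2 = 1 ∧ z 3 = 1 then
    (if z 4 = 0 then (if x = 1 then -32 else 0) else (if x = 0 then 32 else 0))
  else 0

lemma Kint_eq : ∀ x z, Kint x z = Ktgt x z := by decide

/-- A combined bit-and-phase flip `BS₃ = S₃ ∘ B₃` on qubit 3 produces syndrome `1111`: `T(BS₃ f(c)) = α |1111⟩ ⊗ (−c(0)|1⟩ + c(1)|0⟩)` with `α ≠ 0` independent of `c`. -/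
theorem bit_phase_flip_qubit3_syndrome :
    ∃ α : ℂ, α ≠ 0 ∧ ∀ c : Fin 2 → ℂ,
      dec (phaseFlip 2 (bitFlip 2 (enc c))) = α • synData ![1, 1, 1, 1] (c 1) (-(c 0)) := by
  refine ⟨-32, by norm_num, fun c => ?_⟩
  ext z
  have expand : dec (phaseFlip 2 (bitFlip 2 (enc c))) z
      = ∑ x : Fin 2, ((Kint x z : ℤ) : ℂ) * c x := by
    simp only [dec, phaseFlip, bitFlip, enc, Kint, WithLp.ofLp_toLp]
    push_cast
    simp only [Finset.mul_sum, Finset.sum_mul]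
    rw [Finset.sum_comm]
    refine Finset.sum_congr rfl fun x _ => Finset.sum_congr rfl fun y _ => ?_
    rw [pow_add, pow_add]; ring
  rw [expand]
  simp only [Kint_eq, Ktgt, synData, Fin.sum_univ_two, PiLp.smul_apply, WithLp.ofLp_toLp]
  by_cases h0 : z 0 = 1 <;> by_cases h1 : z 1 = 1 <;> by_cases h2 : z 2 = 1
    <;> by_cases h3 : z 3 = 1 <;> by_cases h4 : z 4 = 0
    <;> simp [synData, h0, h1, h2, h3, h4, Matrix.cons_val_zero, Matrix.cons_val_one, Matrix.head_cons, Fin.ext_iff]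
end
end
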